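/- Let (M,d) be a metric space whose completion is \bar M_C (with extended distance also denoted d) and Cauchy boundary ∂_C(M)=\bar M_C∖M, and let I=(a,b)⊆ℝ, −∞≤a<b≤+∞. Let P be a nonempty TIP of V=I×M of the form P=I⁻[γ₊] for a future-directed timelike curve γ₊(t)=(t,c₊(t)), t∈[w,Ω₀)⊆I, and let F be a nonempty TIF of the form F=I⁺[γ₋] for a past-directed timelike curve γ₋(t)=(t,c₋(t)), t∈(Ω₁,w']⊆I. Then P∼_S F if and only if there exist x₀∈∂_C(M) and Ω∈(a,b) such that P={(t',x')∈I×M : t'<Ω−d(x',x₀)} and F={(t',x')∈I×M : t'>Ω+d(x',x₀)}. -/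

import Mathlib

open Set
open scoped ENNReal NNReal

noncomputable section

/-- The product spacetime `V = I × M`, `I = (a,b) ⊆ ℝ`, as a subset of `ℝ × M`. -/
def Spacetime {M : Type*} [MetricSpace M] (a b : EReal) : Set (ℝ × M) :=
  {p | a < (p.1 : EReal) ∧ (p.1 : EReal) < b}

/-- The chronology relation on the product spacetime: `(t₀,x₀) ≪ (t₁,x₁)` iff both points
lie in `V = (a,b) × M` and `t₀ < t₁ - d(x₀,x₁)`. -/
def Chron {M : Type*} [MetricSpace M] (a b : EReal) (p q : ℝ × M) : Prop :=
  p ∈ Spacetime a b ∧ q ∈ Spacetime a b ∧ p.1 < q.1 - dist p.2 q.2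

/-- The chronological past `I⁻(p)`. -/
def IminusPt {M : Type*} [MetricSpace M] (a b : EReal) (p : ℝ × M) : Set (ℝ × M) :=
  {q | Chron a b q p}

/-- The chronological future `I⁺(p)`. -/
def IplusPt {M : Type*} [MetricSpace M] (a b : EReal) (p : ℝ × M) : Set (ℝ × M) :=
  {q | Chron a b p q}

/-- `I⁻[S]`. -/
def IminusSet {M : Type*} [MetricSpace M] (a b : EReal) (S : Set (ℝ × M)) : Set (ℝ × M) :=
  {q | ∃ s ∈ S, Chron a b q s}

/-- `I⁺[S]`. -/
def IplusSet {M : Type*} [MetricSpace M] (a b : EReal) (S : Set (ℝ × M)) : Set (ℝ × M) :=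
  {q | ∃ s ∈ S, Chron a b s q}

/-- A past set: `P = I⁻[P]`. -/
def IsPastSet {M : Type*} [MetricSpace M] (a b : EReal) (P : Set (ℝ × M)) : Prop :=
  IminusSet a b P = P

/-- A future set: `F = I⁺[F]`. -/
def IsFutureSet {M : Type*} [MetricSpace M] (a b : EReal) (F : Set (ℝ × M)) : Prop :=
  IplusSet a b F = F

/-- An indecomposable past set (IP). -/
def IsIP {M : Type*} [MetricSpace M] (a b : EReal) (P : Set (ℝ × M)) : Prop :=
  P.Nonempty ∧ IsPastSet a b P ∧
    ∀ P₁ P₂ : Set (ℝ × M), IsPastSet a b P₁ → IsPastSet a b P₂ → P = P₁ ∪ P₂ →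
      P₁ = P ∨ P₂ = P

/-- An indecomposable future set (IF). -/
def IsIF {M : Type*} [MetricSpace M] (a b : EReal) (F : Set (ℝ × M)) : Prop :=
  F.Nonempty ∧ IsFutureSet a b F ∧
    ∀ F₁ F₂ : Set (ℝ × M), IsFutureSet a b F₁ → IsFutureSet a b F₂ → F = F₁ ∪ F₂ →
      F₁ = F ∨ F₂ = F

/-- A terminal indecomposable past set (TIP): an IP that is not the past of any point of `V`. -/
def IsTIP {M : Type*} [MetricSpace M] (a b : EReal) (P : Set (ℝ × M)) : Prop :=
  IsIP a b P ∧ ∀ p ∈ Spacetime (M := M) a b, P ≠ IminusPt a b p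

/-- A terminal indecomposable future set (TIF). -/
def IsTIF {M : Type*} [MetricSpace M] (a b : EReal) (F : Set (ℝ × M)) : Prop :=
  IsIF a b F ∧ ∀ p ∈ Spacetime (M := M) a b, F ≠ IplusPt a b p

/-- The common future `↑P = I⁺[{q ∈ V : p ≪ q for all p ∈ P}]`. -/
def CommonFuture {M : Type*} [MetricSpace M] (a b : EReal) (P : Set (ℝ × M)) : Set (ℝ × M) :=
  IplusSet a b {q | q ∈ Spacetime a b ∧ ∀ p ∈ P, Chron a b p q}

/-- The common past `↓F = I⁻[{q ∈ V : q ≪ f for all f ∈ F}]`. -/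
def CommonPast {M : Type*} [MetricSpace M] (a b : EReal) (F : Set (ℝ × M)) : Set (ℝ × M) :=
  IminusSet a b {q | q ∈ Spacetime a b ∧ ∀ f ∈ F, Chron a b q f}

/-- `P ∼ₛ F`: `P` is a maximal IP among those contained in `↓F`, and `F` is a maximal IF
among those contained in `↑P`. -/
def SRel {M : Type*} [MetricSpace M] (a b : EReal) (P F : Set (ℝ × M)) : Prop :=
  IsIP a b P ∧ IsIF a b F ∧ P ⊆ CommonPast a b F ∧ F ⊆ CommonFuture a b P ∧
    (∀ P' : Set (ℝ × M), IsIP a b P' → P' ⊆ CommonPast a b F → P ⊆ P' → P' = P) ∧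
    (∀ F' : Set (ℝ × M), IsIF a b F' → F' ⊆ CommonFuture a b P → F ⊆ F' → F' = F)

/-- The chronological past `I⁻[γ]` of the curve `γ(t) = (t, c(t))`, `t ∈ D`. -/
def PastOfCurve {M : Type*} [MetricSpace M] (a b : EReal) (c : ℝ → M) (D : Set ℝ) :
    Set (ℝ × M) :=
  {q | ∃ t ∈ D, Chron a b q (t, c t)}

/-- The chronological future `I⁺[γ]` of the curve `γ(t) = (t, c(t))`, `t ∈ D`. -/
def FutureOfCurve {M : Type*} [MetricSpace M] (a b : EReal) (c : ℝ → M) (D : Set ℝ) :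
    Set (ℝ × M) :=
  {q | ∃ t ∈ D, Chron a b (t, c t) q}

/-- The Busemann function `b_c(x) = sup_{t ∈ D} (t - d(x, c(t))) ∈ ℝ ∪ {±∞}`. -/
def Busemann {M : Type*} [MetricSpace M] (c : ℝ → M) (D : Set ℝ) (x : M) : EReal :=
  sSup {y : EReal | ∃ t ∈ D, y = ((t - dist x (c t) : ℝ) : EReal)}

namespace Stmt0Aux

open UniformSpace Filter

variable {M : Type*} [MetricSpace M] {a b : EReal}

/-- The past cone with apex `(Ω, x₀)`, `x₀` in the completion. -/
def coneP (a b : EReal) (Ω : ℝ) (x₀ : Completion M) : Set (ℝ × M) :=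
  {p : ℝ × M | p ∈ Spacetime a b ∧ p.1 < Ω - dist (p.2 : Completion M) x₀}

/-- The future cone with apex `(Ω, x₀)`, `x₀` in the completion. -/
def coneF (a b : EReal) (Ω : ℝ) (x₀ : Completion M) : Set (ℝ × M) :=
  {p : ℝ × M | p ∈ Spacetime a b ∧ Ω + dist (p.2 : Completion M) x₀ < p.1}

lemma mem_coneP {Ω : ℝ} {x₀ : Completion M} {t : ℝ} {x : M}
    (h1 : a < (t : EReal)) (h2 : (t : EReal) < b)
    (h3 : t < Ω - dist (x : Completion M) x₀) : ((t, x) : ℝ × M) ∈ coneP a b Ω x₀ :=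
  ⟨⟨h1, h2⟩, h3⟩

lemma mem_coneF {Ω : ℝ} {x₀ : Completion M} {t : ℝ} {x : M}
    (h1 : a < (t : EReal)) (h2 : (t : EReal) < b)
    (h3 : Ω + dist (x : Completion M) x₀ < t) : ((t, x) : ℝ × M) ∈ coneF a b Ω x₀ :=
  ⟨⟨h1, h2⟩, h3⟩

lemma exists_near (x₀ : Completion M) {ε : ℝ} (hε : 0 < ε) :
    ∃ y : M, dist (y : Completion M) x₀ < ε := by
  obtain ⟨y, hy⟩ := Metric.denseRange_iff.mp Completion.denseRange_coe x₀ ε hε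
  exact ⟨y, by rwa [dist_comm]⟩

lemma dist_le_add (x y : M) (x₀ : Completion M) :
    dist x y ≤ dist (x : Completion M) x₀ + dist (y : Completion M) x₀ := by
  rw [← Completion.dist_eq]
  exact dist_triangle_right _ _ _

lemma dist_lower (x y : M) (x₀ : Completion M) :
    dist (x : Completion M) x₀ - dist (y : Completion M) x₀ ≤ dist x y := by
  rw [← Completion.dist_eq (α := M) x y]
  have := dist_triangle (x : Completion M) (y : Completion M) x₀
  linarith

lemma chron_trans {p q r : ℝ × M} (h1 : Chron a b p q) (h2 : Chron a b q r) :
    Chron a b p r := by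
  refine ⟨h1.1, h2.2.1, ?_⟩
  have ht := dist_triangle p.2 q.2 r.2
  have h1' := h1.2.2
  have h2' := h2.2.2
  linarith

lemma commonFuture_coneP (Ω : ℝ) (x₀ : Completion M) (ha : a < (Ω : EReal))
    (hb : (Ω : EReal) ≤ b) :
    CommonFuture a b (coneP a b Ω x₀) = coneF a b Ω x₀ := by
  ext q
  constructor
  · rintro ⟨u, ⟨huV, hu⟩, hch⟩
    have key : Ω + dist (u.2 : Completion M) x₀ ≤ u.1 := by
      by_contra hlt
      push_neg at hlt
      set Du := dist (u.2 : Completion M) x₀ with hDu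
      have hδ : 0 < Ω + Du - u.1 := by linarith
      obtain ⟨r, har, hrΩ⟩ := EReal.lt_iff_exists_real_btwn.mp ha
      rw [EReal.coe_lt_coe_iff] at hrΩ
      set ε := min ((Ω + Du - u.1) / 3) ((Ω - r) / 2) with hεdef
      have hε1 : ε ≤ (Ω + Du - u.1) / 3 := min_le_left _ _
      have hε2 : ε ≤ (Ω - r) / 2 := min_le_right _ _
      have hε0 : 0 < ε := lt_min (by linarith) (by linarith)
      obtain ⟨y, hy⟩ := exists_near x₀ hε0
      have hpP : ((Ω - 2 * ε, y) : ℝ × M) ∈ coneP a b Ω x₀ :=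
        mem_coneP (lt_of_lt_of_le har (EReal.coe_le_coe_iff.mpr (by linarith)))
          (lt_of_lt_of_le (EReal.coe_lt_coe_iff.mpr (by linarith)) hb)
          (by linarith)
      have h3 : Ω - 2 * ε < u.1 - dist y u.2 := (hu _ hpP).2.2
      have hlow := dist_lower u.2 y x₀
      have hcomm : dist (y : M) u.2 = dist u.2 y := dist_comm _ _
      linarith
    refine ⟨hch.2.1, ?_⟩
    have h1 := hch.2.2
    have h2 := dist_lower q.2 u.2 x₀
    have h3 : dist u.2 q.2 = dist q.2 u.2 := dist_comm _ _
    linarith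
  · rintro ⟨hqV, hq⟩
    have hDq0 : (0:ℝ) ≤ dist (q.2 : Completion M) x₀ := dist_nonneg
    set Dq := dist (q.2 : Completion M) x₀ with hDq
    set δ := q.1 - Ω - Dq with hδdef
    have hδ : 0 < δ := by simp only [hδdef]; linarith
    obtain ⟨y, hy⟩ := exists_near x₀ (by linarith : (0:ℝ) < δ / 3)
    have haq : a < ((Ω + δ / 3 : ℝ) : EReal) :=
      lt_trans ha (EReal.coe_lt_coe_iff.mpr (by linarith))
    have hqb : ((Ω + δ / 3 : ℝ) : EReal) < b :=
      lt_trans (EReal.coe_lt_coe_iff.mpr (by simp only [hδdef]; linarith)) hqV.2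
    refine ⟨(Ω + δ / 3, y), ⟨⟨haq, hqb⟩, ?_⟩, ?_⟩
    · rintro p ⟨hpV, hp⟩
      refine ⟨hpV, ⟨haq, hqb⟩, show p.1 < (Ω + δ / 3) - dist p.2 y from ?_⟩
      have h2 := dist_le_add p.2 y x₀
      linarith
    · refine ⟨⟨haq, hqb⟩, hqV, show (Ω + δ / 3) < q.1 - dist y q.2 from ?_⟩
      have h2 := dist_le_add y q.2 x₀
      linarith




lemma commonPast_coneF (Ω : ℝ) (x₀ : Completion M) (ha : a < (Ω : EReal))
    (hb : (Ω : EReal) < b) :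
    CommonPast a b (coneF a b Ω x₀) = coneP a b Ω x₀ := by
  ext q
  constructor
  · rintro ⟨u, ⟨huV, hu⟩, hch⟩
    have key : u.1 ≤ Ω - dist (u.2 : Completion M) x₀ := by
      by_contra hlt
      push_neg at hlt
      set Du := dist (u.2 : Completion M) x₀ with hDu
      have hδ : 0 < u.1 - (Ω - Du) := by linarith
      obtain ⟨r, hΩr, hrb⟩ := EReal.lt_iff_exists_real_btwn.mp hb
      rw [EReal.coe_lt_coe_iff] at hΩr
      set ε := min ((u.1 - (Ω - Du)) / 3) ((r - Ω) / 2) with hεdef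
      have hε1 : ε ≤ (u.1 - (Ω - Du)) / 3 := min_le_left _ _
      have hε2 : ε ≤ (r - Ω) / 2 := min_le_right _ _
      have hε0 : 0 < ε := lt_min (by linarith) (by linarith)
      obtain ⟨y, hy⟩ := exists_near x₀ hε0
      have hpF : ((Ω + 2 * ε, y) : ℝ × M) ∈ coneF a b Ω x₀ :=
        mem_coneF (lt_trans ha (EReal.coe_lt_coe_iff.mpr (by linarith)))
          (lt_of_le_of_lt (EReal.coe_le_coe_iff.mpr (by linarith)) hrb)
          (by linarith)
      have h3 : u.1 < (Ω + 2 * ε) - dist u.2 y := (hu _ hpF).2.2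
      have hlow := dist_lower u.2 y x₀
      linarith
    refine ⟨hch.1, ?_⟩
    have h1 := hch.2.2
    have h2 := dist_lower q.2 u.2 x₀
    have h3 : dist q.2 u.2 = dist u.2 q.2 := dist_comm _ _
    linarith
  · rintro ⟨hqV, hq⟩
    have hDq0 : (0:ℝ) ≤ dist (q.2 : Completion M) x₀ := dist_nonneg
    set Dq := dist (q.2 : Completion M) x₀ with hDq
    set δ := Ω - Dq - q.1 with hδdef
    have hδ : 0 < δ := by simp only [hδdef]; linarith
    obtain ⟨y, hy⟩ := exists_near x₀ (by linarith : (0:ℝ) < δ / 3)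
    have haq : a < ((Ω - δ / 3 : ℝ) : EReal) :=
      lt_trans hqV.1 (EReal.coe_lt_coe_iff.mpr (by simp only [hδdef]; linarith))
    have hqb : ((Ω - δ / 3 : ℝ) : EReal) < b :=
      lt_trans (EReal.coe_lt_coe_iff.mpr (by linarith)) hb
    refine ⟨(Ω - δ / 3, y), ⟨⟨haq, hqb⟩, ?_⟩, ?_⟩
    · rintro f ⟨hfV, hf⟩
      refine ⟨⟨haq, hqb⟩, hfV, show (Ω - δ / 3) < f.1 - dist y f.2 from ?_⟩
      have h2 := dist_le_add y f.2 x₀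
      linarith
    · refine ⟨hqV, ⟨haq, hqb⟩, show q.1 < (Ω - δ / 3) - dist q.2 y from ?_⟩
      have h2 := dist_le_add q.2 y x₀
      linarith

lemma isIF_coneF (Ω : ℝ) (x₀ : Completion M) (ha : a < (Ω : EReal))
    (hb : (Ω : EReal) < b) :
    IsIF a b (coneF a b Ω x₀) := by
  obtain ⟨r, hΩr, hrb⟩ := EReal.lt_iff_exists_real_btwn.mp hb
  rw [EReal.coe_lt_coe_iff] at hΩr
  refine ⟨?_, ?_, ?_⟩
  · -- nonempty
    obtain ⟨y, hy⟩ := exists_near x₀ (by linarith : (0:ℝ) < r - Ω)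
    exact ⟨(r, y), mem_coneF (lt_trans ha (EReal.coe_lt_coe_iff.mpr hΩr)) hrb (by linarith)⟩
  · -- future set
    ext q
    constructor
    · rintro ⟨s, ⟨hsV, hs⟩, hch⟩
      refine ⟨hch.2.1, ?_⟩
      have h1 := hch.2.2
      have h2 := dist_lower q.2 s.2 x₀
      have h3 : dist s.2 q.2 = dist q.2 s.2 := dist_comm _ _
      linarith
    · rintro ⟨hqV, hq⟩
      have hd0 : (0:ℝ) ≤ dist (q.2 : Completion M) x₀ := dist_nonneg
      set m := (q.1 + (Ω + dist (q.2 : Completion M) x₀)) / 2 with hm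
      have hm1 : Ω + dist (q.2 : Completion M) x₀ < m := by simp only [hm]; linarith
      have hm2 : m < q.1 := by simp only [hm]; linarith
      refine ⟨(m, q.2), mem_coneF (lt_trans ha (EReal.coe_lt_coe_iff.mpr (by linarith)))
        (lt_trans (EReal.coe_lt_coe_iff.mpr hm2) hqV.2) hm1,
        ⟨⟨lt_trans ha (EReal.coe_lt_coe_iff.mpr (by linarith)),
          lt_trans (EReal.coe_lt_coe_iff.mpr hm2) hqV.2⟩, hqV,
          show m < q.1 - dist q.2 q.2 from by rw [dist_self]; linarith⟩⟩
  · -- indecomposable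
    intro F₁ F₂ h₁ h₂ hunion
    set e := r - Ω with he
    have he0 : 0 < e := by linarith
    set ε : ℕ → ℝ := fun n => e / 4 ^ (n + 1) with hε
    have hε0 : ∀ n, 0 < ε n := fun n => by positivity
    have hεle : ∀ n, ε n ≤ e / 4 := by
      intro n
      apply div_le_div_of_nonneg_left he0.le (by norm_num)
      calc (4:ℝ) = 4 ^ 1 := by norm_num
      _ ≤ 4 ^ (n + 1) := by
        apply pow_le_pow_right₀ (by norm_num)
        omega
    have hεlt : ∀ n m, n < m → 3 * ε m < ε n := by
      intro n m hnm
      have h4 : (4:ℝ) * 4 ^ (n + 1) ≤ 4 ^ (m + 1) := by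
        calc (4:ℝ) * 4 ^ (n + 1) = 4 ^ (n + 2) := by ring
        _ ≤ 4 ^ (m + 1) := by
          apply pow_le_pow_right₀ (by norm_num)
          omega
      show 3 * (e / 4 ^ (m + 1)) < e / 4 ^ (n + 1)
      rw [show (3:ℝ) * (e / 4 ^ (m+1)) = 3 * e / 4 ^ (m+1) by ring, div_lt_div_iff₀ (by positivity) (by positivity)]
      nlinarith [pow_pos (show (0:ℝ) < 4 by norm_num) (n+1), pow_pos (show (0:ℝ) < 4 by norm_num) (m+1)]
    choose y hy using fun n => exists_near x₀ (hε0 n)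
    set p : ℕ → ℝ × M := fun n => (Ω + 2 * ε n, y n) with hp
    have hpF : ∀ n, p n ∈ coneF a b Ω x₀ := by
      intro n
      refine mem_coneF (lt_trans ha (EReal.coe_lt_coe_iff.mpr (by linarith [hε0 n])))
        (lt_trans (EReal.coe_lt_coe_iff.mpr ?_) hrb) (by linarith [hy n, hε0 n])
      have := hεle n
      linarith
    have hchain : ∀ n m, n < m → Chron a b (p m) (p n) := by
      intro n m hnm
      refine ⟨(hpF m).1, (hpF n).1, show Ω + 2 * ε m < (Ω + 2 * ε n) - dist (y m) (y n) from ?_⟩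
      have h2 := dist_le_add (y m) (y n) x₀
      have := hεlt n m hnm
      linarith [hy m, hy n]
    have hcover : ∀ q ∈ coneF a b Ω x₀, ∃ n, Chron a b (p n) q := by
      rintro q ⟨hqV, hq⟩
      set δ := q.1 - (Ω + dist (q.2 : Completion M) x₀) with hδ
      have hδ0 : 0 < δ := by simp only [hδ]; linarith
      obtain ⟨n, hn⟩ := pow_unbounded_of_one_lt (3 * e / δ) (show (1:ℝ) < 4 by norm_num)
      have hn' : 3 * ε n < δ := by
        rw [hε]
        have h4 : (3 * e / δ) < 4 ^ (n + 1) :=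
          lt_of_lt_of_le hn (by apply pow_le_pow_right₀ (by norm_num); omega)
        rw [div_lt_iff₀ hδ0] at h4
        rw [show (3:ℝ) * (e / 4 ^ (n+1)) = 3 * e / 4 ^ (n+1) by ring,
          div_lt_iff₀ (by positivity : (0:ℝ) < (4:ℝ) ^ (n+1))]
        nlinarith [pow_pos (show (0:ℝ) < 4 by norm_num) (n+1)]
      refine ⟨n, (hpF n).1, hqV, show Ω + 2 * ε n < q.1 - dist (y n) q.2 from ?_⟩
      have h2 := dist_le_add (y n) q.2 x₀
      linarith [hy n, hε0 n]
    have hchain' : ∀ n m, n ≤ m → ∀ q, Chron a b (p n) q → Chron a b (p m) q := by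
      intro n m hnm q hq
      rcases eq_or_lt_of_le hnm with rfl | h
      · exact hq
      · exact chron_trans (hchain n m h) hq
    by_cases hcof : ∀ n, ∃ m, n ≤ m ∧ p m ∈ F₁
    · left
      apply subset_antisymm (hunion ▸ Set.subset_union_left)
      intro q hq
      obtain ⟨n, hn⟩ := hcover q hq
      obtain ⟨m, hnm, hmF₁⟩ := hcof n
      rw [← h₁]
      exact ⟨p m, hmF₁, hchain' n m hnm q hn⟩
    · right
      push_neg at hcof
      obtain ⟨n₀, hn₀⟩ := hcof
      apply subset_antisymm (hunion ▸ Set.subset_union_right)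
      intro q hq
      obtain ⟨n, hn⟩ := hcover q hq
      have hmem : p (max n n₀) ∈ F₁ ∪ F₂ := hunion ▸ hpF (max n n₀)
      have hnotF₁ : p (max n n₀) ∉ F₁ := hn₀ _ (le_max_right _ _)
      rw [← h₂]
      exact ⟨p (max n n₀), hmem.resolve_left hnotF₁, hchain' n _ (le_max_left _ _) q hn⟩





lemma exists_curve_limit (cp : ℝ → M) (w Ω₂ : ℝ) (hwΩ : w < Ω₂)
    (Kp : ℝ≥0) (hcp : LipschitzOnWith Kp cp (Set.Ico w Ω₂)) :
    ∃ x₀ : Completion M, ∀ s ∈ Set.Ico w Ω₂,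
      dist ((cp s : Completion M)) x₀ ≤ (Kp : ℝ) * (Ω₂ - s) := by
  set s : ℕ → ℝ := fun n => Ω₂ - (Ω₂ - w) / ((n : ℝ) + 1) with hs
  have hdivpos : ∀ n : ℕ, 0 < (Ω₂ - w) / ((n : ℝ) + 1) := fun n => div_pos (by linarith) (by positivity)
  have hdivle : ∀ N n : ℕ, N ≤ n → (Ω₂ - w) / ((n : ℝ) + 1) ≤ (Ω₂ - w) / ((N : ℝ) + 1) := by
    intro N n hNn
    have : ((N : ℝ) + 1) ≤ (n : ℝ) + 1 := by
      have := (Nat.cast_le (α := ℝ)).mpr hNn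
      linarith
    exact div_le_div_of_nonneg_left (by linarith) (by positivity) this
  have hsmem : ∀ n, s n ∈ Set.Ico w Ω₂ := by
    intro n
    have h1 : (Ω₂ - w) / ((n : ℝ) + 1) ≤ Ω₂ - w :=
      div_le_self (by linarith) (by linarith [Nat.cast_nonneg (α := ℝ) n])
    exact ⟨by simp only [hs]; linarith, by simp only [hs]; linarith [hdivpos n]⟩
  have hcauchy : CauchySeq (fun n => ((cp (s n) : Completion M))) := by
    refine cauchySeq_of_le_tendsto_0 (fun N => (Kp : ℝ) * ((Ω₂ - w) / ((N : ℝ) + 1))) ?_ ?_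
    · intro n m N hn hm
      have hd : dist (s n) (s m) ≤ (Ω₂ - w) / ((N : ℝ) + 1) := by
        rw [Real.dist_eq, abs_le]
        have e1 := hdivle N n hn
        have e2 := hdivle N m hm
        have e3 := hdivpos n
        have e4 := hdivpos m
        constructor <;> (simp only [hs]; linarith)
      have := hcp.dist_le_mul (s n) (hsmem n) (s m) (hsmem m)
      rw [Completion.dist_eq]
      calc dist (cp (s n)) (cp (s m)) ≤ (Kp : ℝ) * dist (s n) (s m) := this
      _ ≤ (Kp : ℝ) * ((Ω₂ - w) / ((N : ℝ) + 1)) :=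
        mul_le_mul_of_nonneg_left hd (NNReal.coe_nonneg Kp)
    · have h0 : Tendsto (fun N : ℕ => (Ω₂ - w) / ((N : ℝ) + 1)) atTop (nhds 0) := by
        have := (tendsto_const_div_atTop_nhds_zero_nat (Ω₂ - w)).comp (tendsto_add_atTop_nat 1)
        refine this.congr fun n => ?_
        simp only [Function.comp_apply]
        push_cast
        ring
      simpa using h0.const_mul (Kp : ℝ)
  obtain ⟨x₀, hx₀⟩ := cauchySeq_tendsto_of_complete hcauchy
  refine ⟨x₀, ?_⟩
  rintro t ⟨htw, htΩ⟩
  have hdt : Tendsto (fun n => dist ((cp t : Completion M)) ((cp (s n) : Completion M)))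
      atTop (nhds (dist ((cp t : Completion M)) x₀)) := tendsto_const_nhds.dist hx₀
  apply le_of_tendsto hdt
  obtain ⟨N, hN⟩ := exists_nat_gt ((Ω₂ - w) / (Ω₂ - t))
  have hNs : ∀ n, N ≤ n → t ≤ s n := by
    intro n hn
    have h1 : (Ω₂ - w) / ((n : ℝ) + 1) ≤ (Ω₂ - w) / ((N : ℝ) + 1) := hdivle N n hn
    have h2 : (Ω₂ - w) / ((N : ℝ) + 1) < Ω₂ - t := by
      rw [div_lt_iff₀ (by positivity)]
      have h3 : (Ω₂ - w) < (N : ℝ) * (Ω₂ - t) := by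
        rw [div_lt_iff₀ (by linarith)] at hN
        linarith
      nlinarith [htΩ, sub_pos.mpr htΩ]
    simp only [hs]
    linarith
  filter_upwards [Filter.eventually_ge_atTop N] with n hn
  rw [Completion.dist_eq]
  have h1 := hcp.dist_le_mul t ⟨htw, htΩ⟩ (s n) (hsmem n)
  have h2 : dist t (s n) ≤ Ω₂ - t := by
    rw [Real.dist_eq, abs_le]
    have := hNs n hn
    have := (hsmem n).2
    constructor <;> linarith
  calc dist (cp t) (cp (s n)) ≤ (Kp : ℝ) * dist t (s n) := h1
  _ ≤ (Kp : ℝ) * (Ω₂ - t) := mul_le_mul_of_nonneg_left h2 (NNReal.coe_nonneg Kp)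

lemma pastOfCurve_eq_coneP (cp : ℝ → M) (w Ω₂ : ℝ) (hwΩ : w < Ω₂)
    (hwa : a < (w : EReal)) (hΩb : (Ω₂ : EReal) ≤ b)
    (Kp : ℝ≥0) (hKp : (Kp : ℝ) < 1)
    (hcp : LipschitzOnWith Kp cp (Set.Ico w Ω₂))
    (x₀ : Completion M)
    (hx₀ : ∀ s ∈ Set.Ico w Ω₂, dist ((cp s : Completion M)) x₀ ≤ (Kp : ℝ) * (Ω₂ - s)) :
    PastOfCurve a b cp (Set.Ico w Ω₂) = coneP a b Ω₂ x₀ := by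
  ext q
  constructor
  · rintro ⟨t, ht, hqV, htV, htime⟩
    refine ⟨hqV, ?_⟩
    have h1 := hx₀ t ht
    have h2 : dist (q.2 : Completion M) x₀ ≤ dist q.2 (cp t) + dist ((cp t : Completion M)) x₀ := by
      rw [← Completion.dist_eq (α := M) q.2 (cp t)]
      exact dist_triangle _ _ _
    have h4 : (Kp : ℝ) * (Ω₂ - t) ≤ Ω₂ - t :=
      mul_le_of_le_one_left (by linarith [ht.2]) hKp.le
    linarith
  · rintro ⟨hqV, hq⟩
    have hDq0 : (0:ℝ) ≤ dist (q.2 : Completion M) x₀ := dist_nonneg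
    set Dq := dist (q.2 : Completion M) x₀ with hDq
    set δ := Ω₂ - Dq - q.1 with hδdef
    have hδ : 0 < δ := by simp only [hδdef]; linarith
    have hKp1 : (0:ℝ) < 1 + (Kp : ℝ) := by positivity
    set s := max w (Ω₂ - δ / (2 * (1 + (Kp : ℝ)))) with hsdef
    have hs1 : w ≤ s := le_max_left _ _
    have hs2 : s < Ω₂ := max_lt hwΩ (by
      have : 0 < δ / (2 * (1 + (Kp : ℝ))) := by positivity
      linarith)
    have hs3 : Ω₂ - s ≤ δ / (2 * (1 + (Kp : ℝ))) := by
      have := le_max_right w (Ω₂ - δ / (2 * (1 + (Kp : ℝ))))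
      simp only [hsdef]
      linarith [this]
    refine ⟨s, ⟨hs1, hs2⟩, hqV,
      ⟨lt_of_lt_of_le hwa (EReal.coe_le_coe_iff.mpr hs1),
        lt_of_lt_of_le (EReal.coe_lt_coe_iff.mpr hs2) hΩb⟩,
      show q.1 < s - dist q.2 (cp s) from ?_⟩
    have h1 := hx₀ s ⟨hs1, hs2⟩
    have h2 : dist q.2 (cp s) ≤ Dq + dist ((cp s : Completion M)) x₀ := by
      rw [← Completion.dist_eq (α := M) q.2 (cp s)]
      exact dist_triangle_right _ _ _
    have h3 : (1 + (Kp : ℝ)) * (Ω₂ - s) ≤ (1 + (Kp : ℝ)) * (δ / (2 * (1 + (Kp : ℝ)))) :=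
      mul_le_mul_of_nonneg_left hs3 (by positivity)
    have h4 : (1 + (Kp : ℝ)) * (δ / (2 * (1 + (Kp : ℝ)))) = δ / 2 := by
      field_simp
    have h5 : (1 + (Kp : ℝ)) * (Ω₂ - s) = (Ω₂ - s) + (Kp : ℝ) * (Ω₂ - s) := by ring
    linarith


end Stmt0Aux

open Stmt0Aux

/-- For the product spacetime `V = (a,b) × M`, a nonempty TIP `P = I⁻[γ₊]`
and a nonempty TIF `F = I⁺[γ₋]` (with `γ₊`, `γ₋` future/past-directed timelike curves
parametrized by time) are S-related iff there are `x₀ ∈ ∂_C(M)` (Cauchy boundary, i.e.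
`x₀` in the completion but not in `M`) and `Ω ∈ (a,b)` with
`P = {(t',x') : t' < Ω - d(x',x₀)}` and `F = {(t',x') : t' > Ω + d(x',x₀)}`. -/
theorem stmt0 {M : Type*} [MetricSpace M] (a b : EReal) (hab : a < b)
    -- the future-directed timelike curve γ₊(t) = (t, c₊ t), t ∈ [w, Ω₀) ⊆ I
    (cp : ℝ → M) (w : ℝ) (Ω₀ : EReal)
    (hw : a < (w : EReal)) (hΩ₀ : Ω₀ ≤ b) (hwΩ₀ : (w : EReal) < Ω₀)
    (Kp : ℝ≥0) (hKp : (Kp : ℝ) < 1)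
    (hcp : LipschitzOnWith Kp cp {t : ℝ | w ≤ t ∧ (t : EReal) < Ω₀})
    -- the past-directed timelike curve γ₋(t) = (t, c₋ t), t ∈ (Ω₁, w'] ⊆ I
    (cm : ℝ → M) (w' : ℝ) (Ω₁ : EReal)
    (hw' : (w' : EReal) < b) (hΩ₁ : a ≤ Ω₁) (hΩ₁w' : Ω₁ < (w' : EReal))
    (Km : ℝ≥0) (hKm : (Km : ℝ) < 1)
    (hcm : LipschitzOnWith Km cm {t : ℝ | Ω₁ < (t : EReal) ∧ t ≤ w'})
    -- P is a nonempty TIP of the form I⁻[γ₊], F a nonempty TIF of the form I⁺[γ₋]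
    (P F : Set (ℝ × M))
    (hP : P = PastOfCurve a b cp {t : ℝ | w ≤ t ∧ (t : EReal) < Ω₀})
    (hF : F = FutureOfCurve a b cm {t : ℝ | Ω₁ < (t : EReal) ∧ t ≤ w'})
    (hPTIP : IsTIP a b P) (hPne : P.Nonempty)
    (hFTIF : IsTIF a b F) (hFne : F.Nonempty) :
    SRel a b P F ↔
      ∃ x₀ : UniformSpace.Completion M,
        x₀ ∉ Set.range ((↑) : M → UniformSpace.Completion M) ∧
        ∃ Ω : ℝ, a < (Ω : EReal) ∧ (Ω : EReal) < b ∧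
          P = {p : ℝ × M | p ∈ Spacetime a b ∧
                p.1 < Ω - dist (p.2 : UniformSpace.Completion M) x₀} ∧
          F = {p : ℝ × M | p ∈ Spacetime a b ∧
                Ω + dist (p.2 : UniformSpace.Completion M) x₀ < p.1} := by
  constructor
  · intro hS
    obtain ⟨hIP, hIF, hPsub, hFsub, hPmax, hFmax⟩ := hS
    have hΩ₀top : Ω₀ ≠ ⊤ := by
      intro htop
      obtain ⟨f, hf⟩ := hFne
      obtain ⟨u, ⟨huV, hu⟩, hch⟩ := hFsub hf
      have hbtop : b = ⊤ := top_le_iff.mp (htop ▸ hΩ₀)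
      have h1K : (0:ℝ) < 1 - (Kp:ℝ) := by linarith
      set s := max w ((u.1 + dist u.2 (cp w) - (Kp:ℝ) * w + 1) / (1 - (Kp:ℝ))) with hsdef
      have hws : w ≤ s := le_max_left _ _
      have hmemw : w ∈ {t : ℝ | w ≤ t ∧ (t:EReal) < Ω₀} := ⟨le_refl w, htop ▸ EReal.coe_lt_top w⟩
      have hmems : s ∈ {t : ℝ | w ≤ t ∧ (t:EReal) < Ω₀} := ⟨hws, htop ▸ EReal.coe_lt_top s⟩
      have hdist : dist (cp w) (cp s) ≤ (Kp:ℝ) * (s - w) := by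
        have h := hcp.dist_le_mul w hmemw s hmems
        rw [Real.dist_eq, abs_of_nonpos (by linarith), neg_sub] at h
        exact h
      have h1 : (u.1 + dist u.2 (cp w) - (Kp:ℝ) * w + 1) ≤ s * (1 - (Kp:ℝ)) := by
        have h1 := le_max_right w ((u.1 + dist u.2 (cp w) - (Kp:ℝ) * w + 1) / (1 - (Kp:ℝ)))
        rw [div_le_iff₀ h1K] at h1
        exact h1
      have huP : u ∈ P := by
        rw [hP]
        refine ⟨s, hmems, huV,
          ⟨lt_of_lt_of_le hw (EReal.coe_le_coe_iff.mpr hws), hbtop ▸ EReal.coe_lt_top s⟩,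
          show u.1 < s - dist u.2 (cp s) from ?_⟩
        have htri : dist u.2 (cp s) ≤ dist u.2 (cp w) + dist (cp w) (cp s) := dist_triangle _ _ _
        have e1 : (Kp:ℝ) * (s - w) = (Kp:ℝ) * s - (Kp:ℝ) * w := by ring
        have e2 : s * (1 - (Kp:ℝ)) = s - (Kp:ℝ) * s := by ring
        linarith
      have hcon := (hu u huP).2.2
      rw [dist_self] at hcon
      linarith
    have hΩ₀bot : Ω₀ ≠ ⊥ := by
      intro hbot
      rw [hbot] at hwΩ₀
      exact (EReal.bot_lt_coe w).not_gt (by exact_mod_cast hwΩ₀)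
    set Ω₂ := Ω₀.toReal with hΩ₂def
    have hΩeq : ((Ω₂ : ℝ) : EReal) = Ω₀ := EReal.coe_toReal hΩ₀top hΩ₀bot
    have hwΩ₂ : w < Ω₂ := by
      rw [← EReal.coe_lt_coe_iff, hΩeq]
      exact hwΩ₀
    have hΩ₂b : ((Ω₂ : ℝ) : EReal) ≤ b := by rw [hΩeq]; exact hΩ₀
    have hDeq : {t : ℝ | w ≤ t ∧ (t : EReal) < Ω₀} = Set.Ico w Ω₂ := by
      ext t
      simp only [Set.mem_setOf_eq, Set.mem_Ico, ← hΩeq, EReal.coe_lt_coe_iff]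
    rw [hDeq] at hcp hP
    obtain ⟨x₀, hx₀⟩ := exists_curve_limit cp w Ω₂ hwΩ₂ Kp hcp
    have hPcone : P = coneP a b Ω₂ x₀ := by
      rw [hP]
      exact pastOfCurve_eq_coneP cp w Ω₂ hwΩ₂ hw hΩ₂b Kp hKp hcp x₀ hx₀
    have haΩ : a < ((Ω₂ : ℝ) : EReal) := by
      obtain ⟨p, hp⟩ := hPne
      rw [hPcone] at hp
      obtain ⟨⟨hp1, -⟩, hp2⟩ := hp
      refine lt_trans hp1 (EReal.coe_lt_coe_iff.mpr ?_)
      linarith [dist_nonneg (x := (p.2 : UniformSpace.Completion M)) (y := x₀)]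
    have hB1 : CommonFuture a b P = coneF a b Ω₂ x₀ := by
      rw [hPcone]
      exact commonFuture_coneP Ω₂ x₀ haΩ hΩ₂b
    have hΩ₂b' : ((Ω₂ : ℝ) : EReal) < b := by
      obtain ⟨f, hf⟩ := hFne
      have hf' := hFsub hf
      rw [hB1] at hf'
      obtain ⟨⟨-, hf2⟩, hf3⟩ := hf'
      refine lt_trans (EReal.coe_lt_coe_iff.mpr ?_) hf2
      linarith [dist_nonneg (x := (f.2 : UniformSpace.Completion M)) (y := x₀)]
    have hFcone : F = coneF a b Ω₂ x₀ := by
      refine (hFmax _ (isIF_coneF Ω₂ x₀ haΩ hΩ₂b') hB1.symm.subset ?_).symm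
      rw [← hB1]
      exact hFsub
    refine ⟨x₀, ?_, Ω₂, haΩ, hΩ₂b', hPcone, hFcone⟩
    rintro ⟨y, rfl⟩
    refine hPTIP.2 (Ω₂, y) ⟨haΩ, hΩ₂b'⟩ ?_
    rw [hPcone]
    ext q
    constructor
    · rintro ⟨hqV, hq⟩
      refine ⟨hqV, ⟨haΩ, hΩ₂b'⟩, show q.1 < Ω₂ - dist q.2 y from ?_⟩
      rwa [UniformSpace.Completion.dist_eq] at hq
    · rintro ⟨hqV, -, hq⟩
      refine ⟨hqV, ?_⟩
      rw [UniformSpace.Completion.dist_eq]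
      exact hq
  · rintro ⟨x₀, hx₀r, Ω, haΩ, hΩb, hPeq, hFeq⟩
    have hPeq' : P = coneP a b Ω x₀ := hPeq
    have hFeq' : F = coneF a b Ω x₀ := hFeq
    have hCF : CommonFuture a b P = F := by
      rw [hPeq', hFeq']
      exact commonFuture_coneP Ω x₀ haΩ hΩb.le
    have hCP : CommonPast a b F = P := by
      rw [hPeq', hFeq']
      exact commonPast_coneF Ω x₀ haΩ hΩb
    refine ⟨hPTIP.1, hFTIF.1, hCP.symm.subset, hCF.symm.subset, ?_, ?_⟩
    · intro P' hP'IP hP'sub hPsub'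
      exact subset_antisymm (hCP ▸ hP'sub) hPsub'
    · intro F' hF'IF hF'sub hFsub'
      exact subset_antisymm (hCF ▸ hF'sub) hFsub'
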